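/- Let 2 ≤ δ ≤ 7. If (Q₁, Q₂) and (Q₁′, Q₂′) are ordered pairs of conic classes in the del Pezzo lattice of rank 1+δ with Q₁·Q₂ = Q₁′·Q₂′, then there exists an element g of the Weyl group W_δ with g(Q₁) = Q₁′ and g(Q₂) = Q₂′; that is, the intersection product determines the W_δ-orbit of an ordered pair of conic classes. -/

import Mathlib

/-- A class in the del Pezzo lattice of rank `1 + δ`: the pair `(a, b)`
represents `a·ℓ − b₁e₁ − ⋯ − b_δ e_δ`. -/
abbrev Cls (δ : ℕ) : Type := ℤ × (Fin δ → ℤ)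

/-- The intersection product: `(a;b)·(a';b') = a a' − Σ bᵢ bᵢ'`. -/
def ip {δ : ℕ} (x y : Cls δ) : ℤ := x.1 * y.1 - ∑ i, x.2 i * y.2 i

/-- The canonical class `K = −3ℓ + e₁ + ⋯ + e_δ`, i.e. `(−3; −1, …, −1)`. -/
def Kcls (δ : ℕ) : Cls δ := (-3, fun _ => -1)

/-- A conic class: `Q·Q = 0` and `K·Q = −2`. -/
def IsConic {δ : ℕ} (Q : Cls δ) : Prop := ip Q Q = 0 ∧ ip (Kcls δ) Q = -2

/-- A `(−1)`-class: `L·L = −1` and `K·L = −1`. -/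
def IsMinusOne {δ : ℕ} (L : Cls δ) : Prop := ip L L = -1 ∧ ip (Kcls δ) L = -1

/-- Membership in the Weyl group `W_δ`: a ℤ-linear automorphism of the lattice
preserving the intersection form and fixing the canonical class. -/
def IsWeyl {δ : ℕ} (g : Cls δ ≃ₗ[ℤ] Cls δ) : Prop :=
  (∀ x y : Cls δ, ip (g x) (g y) = ip x y) ∧ g (Kcls δ) = Kcls δ

namespace DP
open Finset

variable {δ : ℕ}

lemma ip_comm (x y : Cls δ) : ip x y = ip y x := by
  simp [ip, mul_comm]

lemma ip_add_left (x y z : Cls δ) : ip (x + y) z = ip x z + ip y z := by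
  simp [ip, add_mul, mul_add, Finset.sum_add_distrib]; ring

lemma ip_smul_left (c : ℤ) (x y : Cls δ) : ip (c • x) y = c * ip x y := by
  simp only [ip, Prod.smul_fst, Prod.smul_snd, Pi.smul_apply, smul_eq_mul]
  rw [mul_sub, Finset.mul_sum]
  simp [mul_assoc]

lemma ip_add_right (x y z : Cls δ) : ip x (y + z) = ip x y + ip x z := by
  rw [ip_comm, ip_add_left, ip_comm y x, ip_comm z x]

lemma ip_smul_right (c : ℤ) (x y : Cls δ) : ip x (c • y) = c * ip x y := by
  rw [ip_comm, ip_smul_left, ip_comm y x]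

def ipr (r : Cls δ) : Cls δ →ₗ[ℤ] ℤ where
  toFun x := ip x r
  map_add' x y := ip_add_left x y r
  map_smul' c x := by simpa using ip_smul_left c x r

def reflMap (r : Cls δ) : Cls δ →ₗ[ℤ] Cls δ := LinearMap.id + (ipr r).smulRight r

lemma reflMap_apply (r x : Cls δ) : reflMap r x = x + ip x r • r := rfl

lemma reflMap_invol (r : Cls δ) (hr : ip r r = -2) :
    Function.Involutive (reflMap r) := by
  intro x
  rw [reflMap_apply, reflMap_apply, ip_add_left, ip_smul_left, hr]
  module

def reflW (r : Cls δ) (hr : ip r r = -2) : Cls δ ≃ₗ[ℤ] Cls δ :=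
  { reflMap r with
    invFun := reflMap r
    left_inv := reflMap_invol r hr
    right_inv := reflMap_invol r hr }

lemma reflW_apply (r : Cls δ) (hr : ip r r = -2) (x : Cls δ) :
    reflW r hr x = x + ip x r • r := rfl

lemma reflW_weyl (r : Cls δ) (hr : ip r r = -2) (hK : ip (Kcls δ) r = 0) :
    IsWeyl (reflW r hr) := by
  constructor
  · intro x y
    rw [reflW_apply, reflW_apply, ip_add_left, ip_add_right, ip_add_right,
      ip_smul_left, ip_smul_right, ip_smul_right, ip_smul_left, hr, ip_comm r y]
    ring
  · rw [reflW_apply, hK]; simp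

def permW (σ : Equiv.Perm (Fin δ)) : Cls δ ≃ₗ[ℤ] Cls δ where
  toFun x := (x.1, x.2 ∘ σ)
  invFun x := (x.1, x.2 ∘ σ.symm)
  map_add' x y := by ext <;> simp
  map_smul' c x := by ext <;> simp
  left_inv x := by ext <;> simp
  right_inv x := by ext <;> simp

lemma permW_apply (σ : Equiv.Perm (Fin δ)) (x : Cls δ) :
    permW σ x = (x.1, x.2 ∘ σ) := rfl

lemma permW_weyl (σ : Equiv.Perm (Fin δ)) : IsWeyl (permW σ) := by
  constructor
  · intro x y
    simp only [permW_apply, ip, Function.comp]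
    rw [Equiv.sum_comp σ (fun i => x.2 i * y.2 i)]
  · simp only [permW_apply, Kcls]; rfl

lemma weyl_trans {g g' : Cls δ ≃ₗ[ℤ] Cls δ} (hg : IsWeyl g) (hg' : IsWeyl g') :
    IsWeyl (g.trans g') := by
  refine ⟨fun x y => ?_, ?_⟩
  · simp only [LinearEquiv.trans_apply, hg'.1, hg.1]
  · simp only [LinearEquiv.trans_apply, hg.2, hg'.2]

lemma weyl_symm {g : Cls δ ≃ₗ[ℤ] Cls δ} (hg : IsWeyl g) : IsWeyl g.symm := by
  refine ⟨fun x y => ?_, ?_⟩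
  · conv_rhs => rw [← g.apply_symm_apply x, ← g.apply_symm_apply y, hg.1]
  · conv_lhs => rw [← hg.2]
    exact g.symm_apply_apply _

lemma isWeyl_refl : IsWeyl (LinearEquiv.refl ℤ (Cls δ)) := ⟨fun _ _ => rfl, rfl⟩

lemma conic_map {g : Cls δ ≃ₗ[ℤ] Cls δ} (hg : IsWeyl g) {Q : Cls δ}
    (hQ : IsConic Q) : IsConic (g Q) := by
  refine ⟨by rw [hg.1]; exact hQ.1, ?_⟩
  rw [← hg.2, hg.1]; exact hQ.2


variable {δ : ℕ}

lemma conic_sums {Q : Cls δ} (h : IsConic Q) :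
    (∑ i, Q.2 i) = 3 * Q.1 - 2 ∧ (∑ i, Q.2 i ^ 2) = Q.1 ^ 2 := by
  obtain ⟨h1, h2⟩ := h
  simp only [ip, Kcls, neg_mul, one_mul, neg_one_mul, Finset.sum_neg_distrib,
    sub_neg_eq_add] at h1 h2
  constructor
  · linarith
  · have : ∑ i, Q.2 i ^ 2 = ∑ i, Q.2 i * Q.2 i := by
      apply Finset.sum_congr rfl; intro i _; ring
    rw [this]; linarith

lemma conic_bounds (hδ : δ ≤ 7) {Q : Cls δ} (h : IsConic Q) :
    1 ≤ Q.1 ∧ Q.1 ≤ 5 ∧ ∀ i, 0 ≤ Q.2 i ∧ Q.2 i ≤ 2 := by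
  obtain ⟨hs, hss⟩ := conic_sums h
  set a := Q.1 with ha
  set b := Q.2 with hb
  have hcs : (∑ i, b i) ^ 2 ≤ (δ : ℤ) * ∑ i, b i ^ 2 := by
    simpa using sq_sum_le_card_mul_sum_sq (s := (univ : Finset (Fin δ))) (f := b)
  have hδ' : (δ : ℤ) ≤ 7 := by exact_mod_cast hδ
  have hssnn : (0:ℤ) ≤ ∑ i, b i ^ 2 := Finset.sum_nonneg fun i _ => sq_nonneg _
  have hglob : (3 * a - 2) ^ 2 ≤ 7 * a ^ 2 := by
    calc (3 * a - 2)^2 = (∑ i, b i)^2 := by rw [hs]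
    _ ≤ (δ : ℤ) * ∑ i, b i ^ 2 := hcs
    _ ≤ 7 * ∑ i, b i ^ 2 := by apply mul_le_mul_of_nonneg_right hδ' hssnn
    _ = 7 * a ^ 2 := by rw [hss]
  have ha1 : 1 ≤ a := by nlinarith
  have ha5 : a ≤ 5 := by nlinarith
  refine ⟨ha1, ha5, fun i => ?_⟩
  -- per-coordinate Cauchy-Schwarz on univ.erase i
  have hmem : i ∈ (univ : Finset (Fin δ)) := mem_univ i
  have hse : ∑ j ∈ univ.erase i, b j = (3 * a - 2) - b i := by
    rw [Finset.sum_erase_eq_sub hmem, hs]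
  have hsse : ∑ j ∈ univ.erase i, b j ^ 2 = a ^ 2 - b i ^ 2 := by
    rw [Finset.sum_erase_eq_sub hmem, hss]
  have hcse : ((3 * a - 2) - b i) ^ 2 ≤ ((δ - 1 : ℕ) : ℤ) * (a ^ 2 - b i ^ 2) := by
    rw [← hse, ← hsse]
    simpa [Finset.card_erase_of_mem hmem] using
      sq_sum_le_card_mul_sum_sq (s := univ.erase i) (f := b)
  have hnn : (0:ℤ) ≤ a ^ 2 - b i ^ 2 := by
    rw [← hsse]; exact Finset.sum_nonneg fun j _ => sq_nonneg _
  have hd6 : ((δ - 1 : ℕ) : ℤ) ≤ 6 := by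
    have : δ - 1 ≤ 6 := by omega
    exact_mod_cast this
  have hcse6 : ((3 * a - 2) - b i) ^ 2 ≤ 6 * (a ^ 2 - b i ^ 2) :=
    le_trans hcse (mul_le_mul_of_nonneg_right hd6 hnn)
  constructor
  · nlinarith [sq_nonneg (a - 1), sq_nonneg (b i + 1)]
  · nlinarith [sq_nonneg (a - 5), sq_nonneg (b i - 2)]

/-- number of coordinates with a given value -/
def cnt (b : Fin δ → ℤ) (v : ℤ) : ℕ := (univ.filter (fun i => b i = v)).card

lemma sum_ite_const (p : Fin δ → Prop) [DecidablePred p] (c : ℤ) :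
    (∑ i, if p i then c else 0) = c * (univ.filter p).card := by
  have : ∀ i, (if p i then c else 0) = c * (if p i then 1 else 0) := by
    intro i; split_ifs <;> simp
  simp only [this, ← Finset.mul_sum, Finset.sum_boole]

lemma count_sums (b : Fin δ → ℤ) (hb : ∀ i, 0 ≤ b i ∧ b i ≤ 2) :
    ((cnt b 1 : ℤ) + 2 * cnt b 2 = ∑ i, b i) ∧
    ((cnt b 1 : ℤ) + 4 * cnt b 2 = ∑ i, b i ^ 2) := by
  have key : ∀ (c₁ c₂ : ℤ) (f : ℤ → ℤ), f 0 = 0 → f 1 = c₁ → f 2 = c₂ →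
      (∑ i, f (b i)) = c₁ * cnt b 1 + c₂ * cnt b 2 := by
    intro c₁ c₂ f hf0 hf1 hf2
    have : ∀ i, f (b i) = (if b i = 1 then c₁ else 0) + (if b i = 2 then c₂ else 0) := by
      intro i
      have h0 := (hb i).1; have h2 := (hb i).2
      have : b i = 0 ∨ b i = 1 ∨ b i = 2 := by omega
      rcases this with h | h | h <;> rw [h] <;> simp [hf0, hf1, hf2]
    rw [Finset.sum_congr rfl (fun i _ => this i), Finset.sum_add_distrib,
      sum_ite_const, sum_ite_const]
    rfl
  constructor
  · rw [show (∑ i, b i) = ∑ i, id (b i) from rfl, key 1 2 id rfl rfl rfl]; ring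
  · rw [key 1 4 (fun x => x ^ 2) (by norm_num) (by norm_num) (by norm_num)]
    ring

lemma cnt_total (b : Fin δ → ℤ) (hb : ∀ i, 0 ≤ b i ∧ b i ≤ 2) :
    cnt b 0 + cnt b 1 + cnt b 2 = δ := by
  have key : ((cnt b 0 : ℤ) + cnt b 1 + cnt b 2) = δ := by
    have : ∀ i, (1:ℤ) = (if b i = 0 then 1 else 0) + ((if b i = 1 then 1 else 0)
        + (if b i = 2 then 1 else 0)) := by
      intro i
      have h0 := (hb i).1; have h2 := (hb i).2
      have : b i = 0 ∨ b i = 1 ∨ b i = 2 := by omega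
      rcases this with h | h | h <;> rw [h] <;> norm_num
    have h1 : (∑ _i : Fin δ, (1:ℤ)) = δ := by simp
    rw [Finset.sum_congr rfl (fun i _ => this i), Finset.sum_add_distrib,
      Finset.sum_add_distrib, sum_ite_const, sum_ite_const, sum_ite_const] at h1
    unfold cnt; push_cast at h1 ⊢; linarith
  exact_mod_cast key


/-! ### Roots of the form ℓ - e_i - e_j - e_k -/

def root3 (i j k : Fin δ) : Cls δ :=
  (1, fun m => if m ∈ ({i, j, k} : Finset (Fin δ)) then 1 else 0)

lemma sum_mul_root3 (b : Fin δ → ℤ) {i j k : Fin δ}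
    (hij : i ≠ j) (hik : i ≠ k) (hjk : j ≠ k) :
    ∑ m, b m * (root3 i j k).2 m = b i + b j + b k := by
  have : ∀ m, b m * (root3 i j k).2 m
      = if m ∈ ({i, j, k} : Finset (Fin δ)) then b m else 0 := by
    intro m; simp only [root3]; split_ifs <;> simp
  rw [Finset.sum_congr rfl (fun m _ => this m), Finset.sum_ite_mem,
    Finset.univ_inter, Finset.sum_insert (by simp [hij, hik]),
    Finset.sum_insert (by simp [hjk]), Finset.sum_singleton]
  ring

lemma ip_root3_right (Q : Cls δ) {i j k : Fin δ}
    (hij : i ≠ j) (hik : i ≠ k) (hjk : j ≠ k) :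
    ip Q (root3 i j k) = Q.1 - (Q.2 i + Q.2 j + Q.2 k) := by
  rw [ip, sum_mul_root3 Q.2 hij hik hjk]
  simp [root3]

lemma root3_self {i j k : Fin δ} (hij : i ≠ j) (hik : i ≠ k) (hjk : j ≠ k) :
    ip (root3 i j k) (root3 i j k) = -2 := by
  rw [ip_root3_right _ hij hik hjk]
  simp [root3, hij, hik, hjk]

lemma K_root3 {i j k : Fin δ} (hij : i ≠ j) (hik : i ≠ k) (hjk : j ≠ k) :
    ip (Kcls δ) (root3 i j k) = 0 := by
  rw [ip_root3_right _ hij hik hjk]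
  simp [Kcls]

lemma root3_fst : (root3 i j k).1 = 1 := rfl

/-! ### Extraction helpers -/

lemma three_of_card {s : Finset (Fin δ)} (h : 3 ≤ s.card) :
    ∃ i ∈ s, ∃ j ∈ s, ∃ k ∈ s, i ≠ j ∧ i ≠ k ∧ j ≠ k := by
  obtain ⟨t, hts, hc⟩ := Finset.exists_subset_card_eq h
  rw [Finset.card_eq_three] at hc
  obtain ⟨i, j, k, hij, hik, hjk, rfl⟩ := hc
  exact ⟨i, hts (by simp), j, hts (by simp), k, hts (by simp), hij, hik, hjk⟩

lemma two_of_card {s : Finset (Fin δ)} (h : 2 ≤ s.card) :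
    ∃ i ∈ s, ∃ j ∈ s, i ≠ j :=
  Finset.one_lt_card.mp (by omega)

lemma two_avoid {s : Finset (Fin δ)} (i₀ : Fin δ) (h : 2 ≤ (s.erase i₀).card) :
    ∃ i ∈ s, ∃ j ∈ s, i ≠ j ∧ i ≠ i₀ ∧ j ≠ i₀ := by
  obtain ⟨i, hi, j, hj, hij⟩ := two_of_card h
  exact ⟨i, Finset.mem_of_mem_erase hi, j, Finset.mem_of_mem_erase hj, hij,
    Finset.ne_of_mem_erase hi, Finset.ne_of_mem_erase hj⟩

/-! ### Stage 1: every conic class with degree ≥ 2 admits a descent -/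

lemma exists_triple (hδ : δ ≤ 7) {Q : Cls δ} (h : IsConic Q) (ha : 2 ≤ Q.1) :
    ∃ i j k : Fin δ, i ≠ j ∧ i ≠ k ∧ j ≠ k ∧ Q.1 + 1 ≤ Q.2 i + Q.2 j + Q.2 k := by
  obtain ⟨ha1, ha5, hb⟩ := conic_bounds hδ h
  obtain ⟨hs, hss⟩ := conic_sums h
  obtain ⟨hc1, hc2⟩ := count_sums Q.2 hb
  rw [hs] at hc1; rw [hss] at hc2
  obtain ⟨a, b⟩ := Q
  dsimp only at ha1 ha5 hb hc1 hc2 ha ⊢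
  interval_cases a
  · -- a = 2 : cnt2 = 0, cnt1 = 4
    have h1 : 3 ≤ (univ.filter (fun i => b i = 1)).card := by
      have : (cnt b 1 : ℤ) = 4 := by omega
      unfold cnt at this; omega
    obtain ⟨i, hi, j, hj, k, hk, hij, hik, hjk⟩ := three_of_card h1
    simp only [Finset.mem_filter, Finset.mem_univ, true_and] at hi hj hk
    exact ⟨i, j, k, hij, hik, hjk, by omega⟩
  · -- a = 3 : cnt2 = 1, cnt1 = 5
    have h2 : 1 ≤ (univ.filter (fun i => b i = 2)).card := by
      have : (cnt b 2 : ℤ) = 1 := by omega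
      unfold cnt at this; omega
    have h1 : 2 ≤ (univ.filter (fun i => b i = 1)).card := by
      have : (cnt b 1 : ℤ) = 5 := by omega
      unfold cnt at this; omega
    obtain ⟨i, hi⟩ := Finset.card_pos.mp (Nat.lt_of_lt_of_le Nat.zero_lt_one h2)
    obtain ⟨j, hj, k, hk, hjk⟩ := two_of_card h1
    simp only [Finset.mem_filter, Finset.mem_univ, true_and] at hi hj hk
    refine ⟨i, j, k, ?_, ?_, hjk, by omega⟩ <;>
      · rintro rfl; omega
  · -- a = 4 : cnt2 = 3
    have h2 : 3 ≤ (univ.filter (fun i => b i = 2)).card := by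
      have : (cnt b 2 : ℤ) = 3 := by omega
      unfold cnt at this; omega
    obtain ⟨i, hi, j, hj, k, hk, hij, hik, hjk⟩ := three_of_card h2
    simp only [Finset.mem_filter, Finset.mem_univ, true_and] at hi hj hk
    exact ⟨i, j, k, hij, hik, hjk, by omega⟩
  · -- a = 5 : cnt2 = 6
    have h2 : 3 ≤ (univ.filter (fun i => b i = 2)).card := by
      have : (cnt b 2 : ℤ) = 6 := by omega
      unfold cnt at this; omega
    obtain ⟨i, hi, j, hj, k, hk, hij, hik, hjk⟩ := three_of_card h2
    simp only [Finset.mem_filter, Finset.mem_univ, true_and] at hi hj hk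
    exact ⟨i, j, k, hij, hik, hjk, by omega⟩

lemma a_eq_one (hδ : δ ≤ 7) {Q : Cls δ} (h : IsConic Q)
    (hstuck : ¬ ∃ i j k : Fin δ, i ≠ j ∧ i ≠ k ∧ j ≠ k ∧
      Q.1 + 1 ≤ Q.2 i + Q.2 j + Q.2 k) :
    ∃ p : Fin δ, Q.1 = 1 ∧ Q.2 = fun m => if m = p then 1 else 0 := by
  obtain ⟨ha1, ha5, hb⟩ := conic_bounds hδ h
  have ha : Q.1 = 1 := by
    by_contra hne
    exact hstuck (exists_triple hδ h (by omega))
  obtain ⟨hs, hss⟩ := conic_sums h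
  obtain ⟨hc1, hc2⟩ := count_sums Q.2 hb
  rw [hs, ha] at hc1; rw [hss, ha] at hc2
  norm_num at hc1 hc2
  have h1 : (univ.filter (fun i => Q.2 i = 1)).card = 1 := by
    have e2 : (cnt Q.2 2 : ℤ) = 0 := by omega
    have e1 : (cnt Q.2 1 : ℤ) = 1 := by omega
    unfold cnt at e1; omega
  have h2 : (univ.filter (fun i => Q.2 i = 2)).card = 0 := by
    have e2 : (cnt Q.2 2 : ℤ) = 0 := by omega
    unfold cnt at e2; omega
  obtain ⟨p, hp⟩ := Finset.card_eq_one.mp h1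
  refine ⟨p, ha, funext fun m => ?_⟩
  by_cases hm : m = p
  · subst hm
    have : m ∈ univ.filter (fun i => Q.2 i = 1) := hp ▸ Finset.mem_singleton_self m
    simp only [Finset.mem_filter] at this
    simp [this.2]
  · have hne1 : Q.2 m ≠ 1 := by
      intro hc
      have : m ∈ univ.filter (fun i => Q.2 i = 1) := Finset.mem_filter.mpr ⟨mem_univ m, hc⟩
      rw [hp, Finset.mem_singleton] at this; exact hm this
    have hne2 : Q.2 m ≠ 2 := by
      intro hc
      have : m ∈ univ.filter (fun i => Q.2 i = 2) := Finset.mem_filter.mpr ⟨mem_univ m, hc⟩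
      rw [Finset.card_eq_zero.mp h2] at this; exact absurd this (Finset.notMem_empty m)
    have := hb m
    simp only [if_neg hm]
    omega

def c0 (i₀ : Fin δ) : Cls δ := (1, fun m => if m = i₀ then 1 else 0)

lemma to_c0 (hδ : δ ≤ 7) : ∀ N (Q : Cls δ), IsConic Q → Q.1.toNat ≤ N →
    ∀ i₀ : Fin δ, ∃ g : Cls δ ≃ₗ[ℤ] Cls δ, IsWeyl g ∧ g Q = c0 i₀ := by
  intro N
  induction N with
  | zero =>
    intro Q hQ hle i₀
    have := (conic_bounds hδ hQ).1
    omega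
  | succ N IH =>
    intro Q hQ hle i₀
    by_cases hstuck : ∃ i j k : Fin δ, i ≠ j ∧ i ≠ k ∧ j ≠ k ∧
        Q.1 + 1 ≤ Q.2 i + Q.2 j + Q.2 k
    · obtain ⟨i, j, k, hij, hik, hjk, hsum⟩ := hstuck
      have hr : ip (root3 i j k) (root3 i j k) = -2 := root3_self hij hik hjk
      have hw : IsWeyl (reflW (root3 i j k) hr) :=
        reflW_weyl _ hr (K_root3 hij hik hjk)
      set Q' := reflW (root3 i j k) hr Q with hQ'def
      have hQ' : IsConic Q' := conic_map hw hQ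
      have hfst : Q'.1 = Q.1 + ip Q (root3 i j k) := by
        rw [hQ'def, reflW_apply]
        simp [root3]
      have hipr : ip Q (root3 i j k) = Q.1 - (Q.2 i + Q.2 j + Q.2 k) :=
        ip_root3_right Q hij hik hjk
      have hlt : Q'.1 < Q.1 := by omega
      have h1' := (conic_bounds hδ hQ').1
      obtain ⟨g, hg, hgQ⟩ := IH Q' hQ' (by omega) i₀
      refine ⟨(reflW (root3 i j k) hr).trans g, weyl_trans hw hg, ?_⟩
      simpa [LinearEquiv.trans_apply] using hgQ
    · obtain ⟨p, hp1, hp2⟩ := a_eq_one hδ hQ hstuck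
      refine ⟨permW (Equiv.swap p i₀), permW_weyl _, ?_⟩
      rw [permW_apply, hp1, hp2, c0]
      refine Prod.ext rfl ?_
      funext m
      simp only [Function.comp_apply]
      rcases eq_or_ne m i₀ with hm | hm
      · subst hm; simp [Equiv.swap_apply_right]
      · have : Equiv.swap p i₀ m ≠ p := by
          rw [Ne, Equiv.swap_apply_eq_iff, Equiv.swap_apply_left]
          exact hm
        simp [this, hm]


/-! ### Stage 2: normalization in the stabilizer of `c0 i₀` -/

def Stuck (i₀ : Fin δ) (Q : Cls δ) : Prop :=
  ∀ i j : Fin δ, i ≠ j → i ≠ i₀ → j ≠ i₀ → Q.2 i + Q.2 j ≤ Q.1 - Q.2 i₀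

lemma ip_c0 (i₀ : Fin δ) (Q : Cls δ) : ip (c0 i₀) Q = Q.1 - Q.2 i₀ := by
  simp only [ip, c0]
  have : ∀ m, (if m = i₀ then (1:ℤ) else 0) * Q.2 m
      = if m = i₀ then Q.2 m else 0 := by
    intro m; split_ifs <;> simp
  rw [Finset.sum_congr rfl (fun m _ => this m), Finset.sum_ite_eq' univ i₀ Q.2]
  simp

lemma conic_c0 (i₀ : Fin δ) : IsConic (c0 i₀) := by
  constructor
  · rw [ip_c0]; simp [c0]
  · rw [ip_comm, ip_c0 i₀ (Kcls δ)]; simp [Kcls]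

lemma to_stuck (hδ : δ ≤ 7) : ∀ N (Q : Cls δ), IsConic Q → Q.1.toNat ≤ N →
    ∀ i₀ : Fin δ, ∃ g : Cls δ ≃ₗ[ℤ] Cls δ,
      IsWeyl g ∧ g (c0 i₀) = c0 i₀ ∧ Stuck i₀ (g Q) := by
  intro N
  induction N with
  | zero =>
    intro Q hQ hle i₀
    have := (conic_bounds hδ hQ).1
    omega
  | succ N IH =>
    intro Q hQ hle i₀
    by_cases hstuck : Stuck i₀ Q
    · exact ⟨LinearEquiv.refl ℤ _, isWeyl_refl, rfl, hstuck⟩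
    · rw [Stuck] at hstuck
      push_neg at hstuck
      obtain ⟨i, j, hij, hi0, hj0, hgt⟩ := hstuck
      have h0i : i₀ ≠ i := Ne.symm hi0
      have h0j : i₀ ≠ j := Ne.symm hj0
      have hr : ip (root3 i₀ i j) (root3 i₀ i j) = -2 := root3_self h0i h0j hij
      have hw : IsWeyl (reflW (root3 i₀ i j) hr) :=
        reflW_weyl _ hr (K_root3 h0i h0j hij)
      have hfix : reflW (root3 i₀ i j) hr (c0 i₀) = c0 i₀ := by
        rw [reflW_apply]
        have : ip (c0 i₀) (root3 i₀ i j) = 0 := by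
          rw [ip_root3_right _ h0i h0j hij]
          simp [c0, hi0, hj0]
        rw [this]; simp
      set Q' := reflW (root3 i₀ i j) hr Q with hQ'def
      have hQ' : IsConic Q' := conic_map hw hQ
      have hfst : Q'.1 = Q.1 + ip Q (root3 i₀ i j) := by
        rw [hQ'def, reflW_apply]
        simp [root3]
      have hipr : ip Q (root3 i₀ i j) = Q.1 - (Q.2 i₀ + Q.2 i + Q.2 j) :=
        ip_root3_right Q h0i h0j hij
      have h1' := (conic_bounds hδ hQ').1
      obtain ⟨g, hg, hgfix, hgst⟩ := IH Q' hQ' (by omega) i₀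
      refine ⟨(reflW (root3 i₀ i j) hr).trans g, weyl_trans hw hg, ?_, ?_⟩
      · rw [LinearEquiv.trans_apply, hfix, hgfix]
      · rw [LinearEquiv.trans_apply]; exact hgst

lemma one_avoid {b : Fin δ → ℤ} {v : ℤ} {i₀ : Fin δ}
    (h : 1 ≤ ((univ.filter (fun m => b m = v)).erase i₀).card) :
    ∃ p : Fin δ, p ≠ i₀ ∧ b p = v := by
  obtain ⟨p, hp⟩ := Finset.card_pos.mp h
  refine ⟨p, Finset.ne_of_mem_erase hp, ?_⟩
  have := Finset.mem_of_mem_erase hp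
  simp only [Finset.mem_filter] at this
  exact this.2

lemma two_avoid' {b : Fin δ → ℤ} {v : ℤ} {i₀ : Fin δ}
    (h : 2 ≤ ((univ.filter (fun m => b m = v)).erase i₀).card) :
    ∃ i j : Fin δ, i ≠ j ∧ i ≠ i₀ ∧ j ≠ i₀ ∧ b i = v ∧ b j = v := by
  obtain ⟨i, hi, j, hj, hij, hi0, hj0⟩ := two_avoid i₀ h
  simp only [Finset.mem_filter] at hi hj
  exact ⟨i, j, hij, hi0, hj0, hi.2, hj.2⟩

lemma erase_card_big {b : Fin δ → ℤ} {v : ℤ} {i₀ : Fin δ} {n : ℕ}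
    (h : n + 1 ≤ (univ.filter (fun m => b m = v)).card) :
    n ≤ ((univ.filter (fun m => b m = v)).erase i₀).card := by
  have := Finset.pred_card_le_card_erase
    (s := univ.filter (fun m => b m = v)) (a := i₀)
  omega

lemma erase_card_ne {b : Fin δ → ℤ} {v : ℤ} {i₀ : Fin δ} {n : ℕ}
    (hne : b i₀ ≠ v) (h : n ≤ (univ.filter (fun m => b m = v)).card) :
    n ≤ ((univ.filter (fun m => b m = v)).erase i₀).card := by
  rw [Finset.erase_eq_of_notMem (by simp [hne])]
  exact h

lemma mem_count {b : Fin δ → ℤ} {v : ℤ} {i₀ : Fin δ} (h : b i₀ = v) :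
    1 ≤ cnt b v :=
  Finset.card_pos.mpr ⟨i₀, Finset.mem_filter.mpr ⟨mem_univ _, h⟩⟩

lemma stuck_shape (hδ : δ ≤ 7) {i₀ : Fin δ} {Q : Cls δ} (h : IsConic Q)
    (hs : Stuck i₀ Q) :
    (Q.1 = 1 ∧ Q.2 i₀ = 1) ∨ (Q.1 = 1 ∧ Q.2 i₀ = 0) ∨ (Q.1 = 2 ∧ Q.2 i₀ = 0) ∨
    (Q.1 = 3 ∧ Q.2 i₀ = 0) ∨ (Q.1 = 5 ∧ Q.2 i₀ = 1) := by
  obtain ⟨ha1, ha5, hb⟩ := conic_bounds hδ h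
  obtain ⟨hsum, hss⟩ := conic_sums h
  obtain ⟨hc1, hc2⟩ := count_sums Q.2 hb
  have htot := cnt_total Q.2 hb
  rw [hsum] at hc1; rw [hss] at hc2
  have hb0 := hb i₀
  obtain ⟨a, b⟩ := Q
  dsimp only at ha1 ha5 hb hc1 hc2 hsum hss hb0 hs htot ⊢
  unfold Stuck at hs; dsimp only at hs
  have hcof : cnt b 1 = (univ.filter (fun m => b m = 1)).card := rfl
  have hcof2 : cnt b 2 = (univ.filter (fun m => b m = 2)).card := rfl
  interval_cases a
  · -- a = 1 : cnt2 = 0, cnt1 = 1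
    have e2 : cnt b 2 = 0 := by omega
    have hne2 : b i₀ ≠ 2 := fun hc => by have := mem_count hc; omega
    have : b i₀ = 0 ∨ b i₀ = 1 := by omega
    rcases this with h0 | h0
    · exact Or.inr (Or.inl ⟨rfl, h0⟩)
    · exact Or.inl ⟨rfl, h0⟩
  · -- a = 2 : cnt2 = 0, cnt1 = 4
    have e2 : cnt b 2 = 0 := by omega
    have e1 : cnt b 1 = 4 := by omega
    have hne2 : b i₀ ≠ 2 := fun hc => by have := mem_count hc; omega
    have : b i₀ = 0 ∨ b i₀ = 1 := by omega
    rcases this with h0 | h0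
    · exact Or.inr (Or.inr (Or.inl ⟨rfl, h0⟩))
    · exfalso
      obtain ⟨i, j, hij, hi0, hj0, hbi, hbj⟩ :=
        two_avoid' (b := b) (v := 1) (i₀ := i₀) (erase_card_big (by omega))
      have := hs i j hij hi0 hj0
      omega
  · -- a = 3 : cnt2 = 1, cnt1 = 5
    have e2 : cnt b 2 = 1 := by omega
    have e1 : cnt b 1 = 5 := by omega
    have : b i₀ = 0 ∨ b i₀ = 1 ∨ b i₀ = 2 := by omega
    rcases this with h0 | h0 | h0
    · exact Or.inr (Or.inr (Or.inr (Or.inl ⟨rfl, h0⟩)))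
    · exfalso
      obtain ⟨p, hp0, hbp⟩ := one_avoid (b := b) (v := 2) (i₀ := i₀)
        (erase_card_ne (by omega) (by omega))
      obtain ⟨q, hq0, hbq⟩ := one_avoid (b := b) (v := 1) (i₀ := i₀)
        (erase_card_big (by omega))
      have hpq : p ≠ q := fun hc => by rw [hc] at hbp; omega
      have := hs p q hpq hp0 hq0
      omega
    · exfalso
      obtain ⟨i, j, hij, hi0, hj0, hbi, hbj⟩ :=
        two_avoid' (b := b) (v := 1) (i₀ := i₀) (erase_card_ne (by omega) (by omega))
      have := hs i j hij hi0 hj0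
      omega
  · -- a = 4 : cnt2 = 3, cnt1 = 4, cnt0 = 0
    have e2 : cnt b 2 = 3 := by omega
    have e1 : cnt b 1 = 4 := by omega
    have e0 : cnt b 0 = 0 := by omega
    have hne0 : b i₀ ≠ 0 := fun hc => by have := mem_count hc; omega
    exfalso
    have : b i₀ = 1 ∨ b i₀ = 2 := by omega
    rcases this with h0 | h0
    · obtain ⟨i, j, hij, hi0, hj0, hbi, hbj⟩ :=
        two_avoid' (b := b) (v := 2) (i₀ := i₀) (erase_card_ne (by omega) (by omega))
      have := hs i j hij hi0 hj0
      omega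
    · obtain ⟨i, j, hij, hi0, hj0, hbi, hbj⟩ :=
        two_avoid' (b := b) (v := 2) (i₀ := i₀) (erase_card_big (by omega))
      have := hs i j hij hi0 hj0
      omega
  · -- a = 5 : cnt2 = 6, cnt1 = 1, cnt0 = 0
    have e2 : cnt b 2 = 6 := by omega
    have e1 : cnt b 1 = 1 := by omega
    have e0 : cnt b 0 = 0 := by omega
    have hne0 : b i₀ ≠ 0 := fun hc => by have := mem_count hc; omega
    have : b i₀ = 1 ∨ b i₀ = 2 := by omega
    rcases this with h0 | h0
    · exact Or.inr (Or.inr (Or.inr (Or.inr ⟨rfl, h0⟩)))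
    · exfalso
      obtain ⟨i, j, hij, hi0, hj0, hbi, hbj⟩ :=
        two_avoid' (b := b) (v := 2) (i₀ := i₀) (erase_card_big (by omega))
      have := hs i j hij hi0 hj0
      omega


/-! ### Matching two functions with equal value-counts by a permutation -/

lemma cnt_comp (b : Fin δ → ℤ) (e : Equiv.Perm (Fin δ)) (v : ℤ) :
    cnt (b ∘ e) v = cnt b v := by
  unfold cnt
  apply Finset.card_bij (fun m _ => e m)
  · intro m hm
    simp only [Finset.mem_filter, Finset.mem_univ, true_and, Function.comp_apply] at hm ⊢
    exact hm
  · intro m₁ _ m₂ _ hmm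
    exact e.injective hmm
  · intro m hm
    simp only [Finset.mem_filter, Finset.mem_univ, true_and] at hm
    exact ⟨e.symm m, by simp [hm], by simp⟩

lemma match_perm : ∀ N (b b' : Fin δ → ℤ) (i₀ : Fin δ), b i₀ = b' i₀ →
    (∀ v, cnt b v = cnt b' v) →
    (univ.filter (fun m => b m ≠ b' m)).card ≤ N →
    ∃ σ : Equiv.Perm (Fin δ), σ i₀ = i₀ ∧ ∀ m, b (σ m) = b' m := by
  intro N
  induction N with
  | zero =>
    intro b b' i₀ h0 hcnt hN
    refine ⟨1, rfl, fun m => ?_⟩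
    simp only [Equiv.Perm.coe_one, id_eq]
    by_contra hc
    have : m ∈ univ.filter (fun m => b m ≠ b' m) :=
      Finset.mem_filter.mpr ⟨mem_univ _, hc⟩
    have := Finset.card_pos.mpr ⟨m, this⟩
    omega
  | succ N IH =>
    intro b b' i₀ h0 hcnt hN
    by_cases hbb : ∀ m, b m = b' m
    · exact ⟨1, rfl, fun m => by simp [hbb]⟩
    push_neg at hbb
    obtain ⟨i, hi⟩ := hbb
    set v := b' i with hv
    -- find j with b j = v and b' j ≠ v
    have hsplit : ∀ c : Fin δ → ℤ,
        (univ.filter (fun m => c m = v)).card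
          = ((univ.filter (fun m => c m = v)).filter (fun m => b' m = v)).card
            + ((univ.filter (fun m => c m = v)).filter (fun m => ¬ b' m = v)).card :=
      fun c => (Finset.card_filter_add_card_filter_not _).symm
    have hcomm : ((univ.filter (fun m => b m = v)).filter (fun m => b' m = v)).card
        = ((univ.filter (fun m => b' m = v)).filter (fun m => b m = v)).card := by
      rw [Finset.filter_comm]
    have hcnteq : (univ.filter (fun m => b m = v)).card
        = (univ.filter (fun m => b' m = v)).card := hcnt v
    have himem : i ∈ (univ.filter (fun m => b' m = v)).filter (fun m => ¬ b m = v) :=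
      Finset.mem_filter.mpr ⟨Finset.mem_filter.mpr ⟨mem_univ _, hv.symm⟩, hi⟩
    have hpos : 0 < ((univ.filter (fun m => b' m = v)).filter (fun m => ¬ b m = v)).card :=
      Finset.card_pos.mpr ⟨i, himem⟩
    have hsplit' : (univ.filter (fun m => b' m = v)).card
        = ((univ.filter (fun m => b' m = v)).filter (fun m => b m = v)).card
          + ((univ.filter (fun m => b' m = v)).filter (fun m => ¬ b m = v)).card :=
      (Finset.card_filter_add_card_filter_not _).symm
    have hsb := hsplit b
    have hposj : 0 < ((univ.filter (fun m => b m = v)).filter (fun m => ¬ b' m = v)).card := by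
      omega
    obtain ⟨j, hj⟩ := Finset.card_pos.mp hposj
    simp only [Finset.mem_filter, Finset.mem_univ, true_and] at hj
    obtain ⟨hbj, hbj'⟩ := hj
    -- basic distinctness
    have hij : i ≠ j := fun hc => hi (hc ▸ hbj)
    have hi0 : i ≠ i₀ := fun hc => hi (by rw [hc, h0, ← hc, ← hv])
    have hj0 : j ≠ i₀ := fun hc => hbj' (by rw [hc, ← h0, ← hc]; exact hbj)
    -- swap
    set e := Equiv.swap i j with he
    have he0 : e i₀ = i₀ := Equiv.swap_apply_of_ne_of_ne (Ne.symm hi0) (Ne.symm hj0)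
    have hsub : (univ.filter fun m => (b ∘ e) m ≠ b' m)
        ⊆ (univ.filter fun m => b m ≠ b' m).erase i := by
      intro m hm
      simp only [Finset.mem_filter, Finset.mem_univ, true_and, Function.comp_apply] at hm
      rw [Finset.mem_erase, Finset.mem_filter]
      rcases eq_or_ne m i with rfl | hmi
      · exfalso
        rw [he, Equiv.swap_apply_left] at hm
        exact hm (hbj.trans hv)
      rcases eq_or_ne m j with rfl | hmj
      · exact ⟨hmi, mem_univ _, fun hc => hbj' (hc.symm.trans hbj)⟩
      · rw [he, Equiv.swap_apply_of_ne_of_ne hmi hmj] at hm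
        exact ⟨hmi, mem_univ _, hm⟩
    have himem2 : i ∈ univ.filter (fun m => b m ≠ b' m) :=
      Finset.mem_filter.mpr ⟨mem_univ _, hi⟩
    have hcard : (univ.filter fun m => (b ∘ e) m ≠ b' m).card ≤ N := by
      have h1 := Finset.card_le_card hsub
      have h2 := Finset.card_erase_of_mem himem2
      omega
    obtain ⟨σ', hσ'0, hσ'⟩ := IH (b ∘ e) b' i₀
      (by simp only [Function.comp_apply, he0]; exact h0)
      (fun w => (cnt_comp b e w).trans (hcnt w)) hcard
    refine ⟨σ'.trans e, ?_, fun m => ?_⟩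
    · rw [Equiv.trans_apply, hσ'0, he0]
    · rw [Equiv.trans_apply]
      exact hσ' m


lemma stage2_match (hδ : δ ≤ 7) {i₀ : Fin δ} {Q Q' : Cls δ}
    (h : IsConic Q) (h' : IsConic Q') (hst : Stuck i₀ Q) (hst' : Stuck i₀ Q')
    (hn : Q.1 - Q.2 i₀ = Q'.1 - Q'.2 i₀) :
    ∃ g : Cls δ ≃ₗ[ℤ] Cls δ, IsWeyl g ∧ g (c0 i₀) = c0 i₀ ∧ g Q = Q' := by
  have hsh := stuck_shape hδ h hst
  have hsh' := stuck_shape hδ h' hst'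
  have haa : Q.1 = Q'.1 ∧ Q.2 i₀ = Q'.2 i₀ := by
    rcases hsh with ⟨e1, e2⟩ | ⟨e1, e2⟩ | ⟨e1, e2⟩ | ⟨e1, e2⟩ | ⟨e1, e2⟩ <;>
      rcases hsh' with ⟨f1, f2⟩ | ⟨f1, f2⟩ | ⟨f1, f2⟩ | ⟨f1, f2⟩ | ⟨f1, f2⟩ <;>
      constructor <;> omega
  obtain ⟨_, _, hb⟩ := conic_bounds hδ h
  obtain ⟨_, _, hb'⟩ := conic_bounds hδ h'
  obtain ⟨hs, hss⟩ := conic_sums h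
  obtain ⟨hs', hss'⟩ := conic_sums h'
  obtain ⟨hc1, hc2⟩ := count_sums Q.2 hb
  obtain ⟨hc1', hc2'⟩ := count_sums Q'.2 hb'
  have htot := cnt_total Q.2 hb
  have htot' := cnt_total Q'.2 hb'
  rw [hs] at hc1; rw [hss] at hc2; rw [hs'] at hc1'; rw [hss'] at hc2'
  rw [haa.1] at hc1 hc2
  obtain ⟨A, hA⟩ : ∃ A, Q'.1 ^ 2 = A := ⟨_, rfl⟩
  rw [hA] at hc2 hc2'
  have hcnt : ∀ v, cnt Q.2 v = cnt Q'.2 v := by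
    intro v
    rcases eq_or_ne v 0 with rfl | hv0
    · have h1 : cnt Q.2 1 = cnt Q'.2 1 := by omega
      have h2 : cnt Q.2 2 = cnt Q'.2 2 := by omega
      omega
    rcases eq_or_ne v 1 with rfl | hv1
    · omega
    rcases eq_or_ne v 2 with rfl | hv2
    · omega
    · have hz : ∀ (c : Fin δ → ℤ), (∀ i, 0 ≤ c i ∧ c i ≤ 2) → cnt c v = 0 := by
        intro c hc
        unfold cnt
        rw [Finset.card_eq_zero, Finset.filter_eq_empty_iff]
        intro m _
        have := hc m
        omega
      rw [hz Q.2 hb, hz Q'.2 hb']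
  obtain ⟨σ, hσ0, hσ⟩ := match_perm _ Q.2 Q'.2 i₀ haa.2 hcnt le_rfl
  refine ⟨permW σ, permW_weyl σ, ?_, ?_⟩
  · rw [permW_apply, c0]
    refine Prod.ext rfl ?_
    funext m
    simp only [Function.comp_apply]
    rcases eq_or_ne m i₀ with rfl | hm
    · simp [hσ0]
    · have : σ m ≠ i₀ := fun hc => hm (σ.injective (hc.trans hσ0.symm))
      simp [this, hm]
  · rw [permW_apply]
    exact Prod.ext haa.1 (funext hσ)

lemma main_aux (hδ : δ ≤ 7) (i₀ : Fin δ) (Q₁ Q₂ Q₁' Q₂' : Cls δ)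
    (hQ₁ : IsConic Q₁) (hQ₂ : IsConic Q₂) (hQ₁' : IsConic Q₁') (hQ₂' : IsConic Q₂')
    (h : ip Q₁ Q₂ = ip Q₁' Q₂') :
    ∃ g : Cls δ ≃ₗ[ℤ] Cls δ, IsWeyl g ∧ g Q₁ = Q₁' ∧ g Q₂ = Q₂' := by
  obtain ⟨g₁, hg₁, hg₁Q⟩ := to_c0 hδ Q₁.1.toNat Q₁ hQ₁ le_rfl i₀
  obtain ⟨g₁', hg₁', hg₁Q'⟩ := to_c0 hδ Q₁'.1.toNat Q₁' hQ₁' le_rfl i₀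
  have hR₂ : IsConic (g₁ Q₂) := conic_map hg₁ hQ₂
  have hR₂' : IsConic (g₁' Q₂') := conic_map hg₁' hQ₂'
  obtain ⟨gA, hgA, hgAfix, hgAst⟩ :=
    to_stuck hδ (g₁ Q₂).1.toNat (g₁ Q₂) hR₂ le_rfl i₀
  obtain ⟨gA', hgA', hgAfix', hgAst'⟩ :=
    to_stuck hδ (g₁' Q₂').1.toNat (g₁' Q₂') hR₂' le_rfl i₀
  have hS : IsConic (gA (g₁ Q₂)) := conic_map hgA hR₂
  have hS' : IsConic (gA' (g₁' Q₂')) := conic_map hgA' hR₂'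
  have hip : ip (c0 i₀) (gA (g₁ Q₂)) = ip Q₁ Q₂ := by
    rw [← hgAfix, hgA.1, ← hg₁Q, hg₁.1]
  have hip' : ip (c0 i₀) (gA' (g₁' Q₂')) = ip Q₁' Q₂' := by
    rw [← hgAfix', hgA'.1, ← hg₁Q', hg₁'.1]
  have hn : (gA (g₁ Q₂)).1 - (gA (g₁ Q₂)).2 i₀
      = (gA' (g₁' Q₂')).1 - (gA' (g₁' Q₂')).2 i₀ := by
    rw [← ip_c0, ← ip_c0, hip, hip', h]
  obtain ⟨p, hp, hpfix, hpeq⟩ := stage2_match hδ hS hS' hgAst hgAst' hn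
  refine ⟨((g₁.trans gA).trans p).trans ((gA'.symm).trans g₁'.symm),
    ?_, ?_, ?_⟩
  · exact weyl_trans (weyl_trans (weyl_trans hg₁ hgA) hp)
      (weyl_trans (weyl_symm hgA') (weyl_symm hg₁'))
  · simp only [LinearEquiv.trans_apply]
    rw [hg₁Q, hgAfix, hpfix, ← hgAfix', LinearEquiv.symm_apply_apply, ← hg₁Q',
      LinearEquiv.symm_apply_apply]
  · simp only [LinearEquiv.trans_apply]
    rw [hpeq, LinearEquiv.symm_apply_apply, LinearEquiv.symm_apply_apply]

end DP

/-- For 2 ≤ δ ≤ 7, the intersection product determines the Weyl-group orbit of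
an ordered pair of conic classes. -/
theorem stmt5 (δ : ℕ) (h1 : 2 ≤ δ) (h2 : δ ≤ 7)
    (Q₁ Q₂ Q₁' Q₂' : Cls δ)
    (hQ₁ : IsConic Q₁) (hQ₂ : IsConic Q₂) (hQ₁' : IsConic Q₁') (hQ₂' : IsConic Q₂')
    (h : ip Q₁ Q₂ = ip Q₁' Q₂') :
    ∃ g : Cls δ ≃ₗ[ℤ] Cls δ, IsWeyl g ∧ g Q₁ = Q₁' ∧ g Q₂ = Q₂' :=
  DP.main_aux h2 ⟨0, by omega⟩ Q₁ Q₂ Q₁' Q₂' hQ₁ hQ₂ hQ₁' hQ₂' h
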